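/- Let 0 < q < 1, p > 1, and α < 1 - 1/p. The best (smallest) constant C such that ∑_{j∈ℤ} q^{j(p(α-1)+1)} (∑_{i=j}^∞ q^{i(1-α)} f(q^i))^p ≤ C (1-q)^{-p-1} · (1-q) ∑_{i∈ℤ} q^i f(q^i)^p holds for all nonnegative f equals [(p-1)/p - α]_q^{-p}, where [β]_q = (1-q^β)/(1-q). -/

import Mathlib

open scoped ENNReal

namespace QHardyAux

open MeasureTheory

lemma geom (Q : ℝ≥0∞) (hQ0 : Q ≠ 0) (hQt : Q ≠ ⊤) (x c : ℝ) :
    ∑' m : ℕ, Q ^ (x + (m : ℝ) * c) = Q ^ x * (1 - Q ^ c)⁻¹ := by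
  have h : ∀ m : ℕ, Q ^ (x + (m : ℝ) * c) = Q ^ x * (Q ^ c) ^ m := fun m => by
    rw [ENNReal.rpow_add _ _ hQ0 hQt, mul_comm (m : ℝ) c, ENNReal.rpow_mul,
      ENNReal.rpow_natCast]
  simp_rw [h]
  rw [ENNReal.tsum_mul_left, ENNReal.tsum_geometric]

lemma holder {p p' : ℝ} (hpq : p.HolderConjugate p') (u v : ℕ → ℝ≥0∞) :
    ∑' m, u m * v m ≤ (∑' m, u m ^ p) ^ (1 / p) * (∑' m, v m ^ p') ^ (1 / p') := by
  have h := ENNReal.lintegral_mul_le_Lp_mul_Lq (Measure.count : Measure ℕ) hpq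
    (measurable_from_top : Measurable u).aemeasurable
    (measurable_from_top : Measurable v).aemeasurable
  simpa [lintegral_count] using h

def shiftEquiv : ℤ × ℕ ≃ ℤ × ℕ where
  toFun x := (x.1 - x.2, x.2)
  invFun x := (x.1 + x.2, x.2)
  left_inv x := by simp
  right_inv x := by simp

lemma reindex (F : ℤ → ℤ → ℝ≥0∞) :
    ∑' (j : ℤ) (m : ℕ), F j (j + m) = ∑' (i : ℤ) (k : ℕ), F (i - k) i := by
  rw [← ENNReal.tsum_prod (f := fun (j : ℤ) (m : ℕ) => F j (j + m)),
      ← ENNReal.tsum_prod (f := fun (i : ℤ) (k : ℕ) => F (i - k) i),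
      ← Equiv.tsum_eq shiftEquiv (fun x : ℤ × ℕ => F x.1 (x.1 + x.2))]
  exact tsum_congr fun y => by simp [shiftEquiv]

lemma tsum_int_eq (h : ℤ → ℝ≥0∞) (h0 : ∀ i : ℤ, i < 0 → h i = 0) :
    ∑' i : ℤ, h i = ∑' n : ℕ, h n := by
  refine (Function.Injective.tsum_eq (fun a b hab => by exact_mod_cast hab) ?_).symm
  intro i hi
  rcases le_or_gt 0 i with h1 | h1
  · exact ⟨i.toNat, by simp [Int.toNat_of_nonneg h1]⟩
  · exact absurd (h0 i h1) hi

lemma core_upper (q p β : ℝ) (hq : 0 < q) (hq1 : q < 1) (hp : 1 < p) (hβ : 1 < p * β)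
    (g : ℤ → ℝ≥0∞) :
    ∑' j : ℤ, (ENNReal.ofReal q) ^ ((j : ℝ) * (1 - p * β)) *
        (∑' m : ℕ, (ENNReal.ofReal q) ^ (((j : ℝ) + (m : ℝ)) * β) * g (j + m)) ^ p
      ≤ (1 - (ENNReal.ofReal q) ^ (β - 1 / p)) ^ (-p) *
          ∑' i : ℤ, (ENNReal.ofReal q) ^ (i : ℝ) * g i ^ p := by
  set Q := ENNReal.ofReal q with hQdef
  have hp0 : (0:ℝ) < p := lt_trans one_pos hp
  have hpne : p ≠ 0 := hp0.ne'
  have hp1ne : p - 1 ≠ 0 := by intro h; exact absurd (by linarith : p = 1) (ne_of_gt hp)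
  have hp1 : (0:ℝ) ≤ p - 1 := by linarith
  have hQ0 : Q ≠ 0 := (ENNReal.ofReal_pos.mpr hq).ne'
  have hQt : Q ≠ ⊤ := ENNReal.ofReal_ne_top
  set γ := β - 1/p with hγdef
  have hγ : 0 < γ := by rw [hγdef, sub_pos, div_lt_iff₀ hp0]; linarith
  set p' := p / (p - 1) with hp'def
  have hpq : p.HolderConjugate p' := (Real.holderConjugate_iff_eq_conjExponent hp).2 hp'def
  set σ := (p * β - 1) * (p - 1) / (p * p) with hσdef
  have hσp' : σ * p' = γ := by rw [hσdef, hp'def, hγdef]; field_simp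
  have hβσ : (β - σ) * p - γ = 1 := by rw [hσdef, hγdef]; field_simp; ring
  have hexp : (1 - p*β) + γ * (p-1) = -γ := by rw [hγdef]; field_simp; ring
  have h1p' : 1/p' * p = p - 1 := by rw [hp'def]; field_simp
  have hQγ1 : Q ^ γ < 1 :=
    ENNReal.rpow_lt_one (by rw [hQdef]; exact ENNReal.ofReal_lt_one.mpr hq1) hγ
  have hD0' : (1 - Q ^ γ) ≠ 0 := by
    simp only [ne_eq, tsub_eq_zero_iff_le]
    exact fun hle => absurd hQγ1 (not_lt.mpr hle)
  have hD1' : (1 - Q ^ γ) ≠ ⊤ := (lt_of_le_of_lt tsub_le_self ENNReal.one_lt_top).ne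
  have e2 : ∀ X : ℝ≥0∞, (X ^ (1/p)) ^ p = X := fun X => by
    rw [← ENNReal.rpow_mul, one_div, inv_mul_cancel₀ hpne, ENNReal.rpow_one]
  -- inner Hölder estimate
  have hinner : ∀ j : ℤ,
      (∑' m : ℕ, Q ^ (((j:ℝ) + (m:ℝ)) * β) * g (j + m)) ^ p
        ≤ Q ^ ((j:ℝ) * γ * (p-1)) * ((1 - Q ^ γ)⁻¹) ^ (p-1) *
            ∑' m : ℕ, Q ^ (((j:ℝ) + (m:ℝ)) * ((β - σ) * p)) * g (j + m) ^ p := by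
    intro j
    set u : ℕ → ℝ≥0∞ := fun m => Q ^ (((j:ℝ) + (m:ℝ)) * σ) with hu
    set v : ℕ → ℝ≥0∞ := fun m => Q ^ (((j:ℝ) + (m:ℝ)) * (β - σ)) * g (j + m) with hv
    have hsplit : ∀ m : ℕ, Q ^ (((j:ℝ) + (m:ℝ)) * β) * g (j + m) = u m * v m := by
      intro m
      rw [hu, hv]
      dsimp only
      rw [show ((j:ℝ) + (m:ℝ)) * β = ((j:ℝ)+(m:ℝ)) * σ + ((j:ℝ)+(m:ℝ)) * (β-σ) by ring,
        ENNReal.rpow_add _ _ hQ0 hQt, mul_assoc]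
    have hU : ∑' m, u m ^ p' = Q ^ ((j:ℝ) * γ) * (1 - Q ^ γ)⁻¹ := by
      have h1 : ∀ m : ℕ, u m ^ p' = Q ^ ((j:ℝ) * γ + (m:ℝ) * γ) := by
        intro m
        rw [hu]; dsimp only
        rw [← ENNReal.rpow_mul,
          show (((j:ℝ) + (m:ℝ)) * σ) * p' = (j:ℝ) * (σ * p') + (m:ℝ) * (σ * p') by ring, hσp']
      rw [tsum_congr h1, geom Q hQ0 hQt]
    have hV : ∑' m, v m ^ p
        = ∑' m : ℕ, Q ^ (((j:ℝ) + (m:ℝ)) * ((β - σ) * p)) * g (j + m) ^ p := by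
      refine tsum_congr fun m => ?_
      rw [hv]; dsimp only
      rw [ENNReal.mul_rpow_of_nonneg _ _ hp0.le, ← ENNReal.rpow_mul, mul_assoc]
    have e1 : ((Q ^ ((j:ℝ) * γ) * (1 - Q ^ γ)⁻¹) ^ (1/p')) ^ p
        = Q ^ ((j:ℝ) * γ * (p-1)) * ((1 - Q ^ γ)⁻¹) ^ (p-1) := by
      rw [← ENNReal.rpow_mul, h1p', ENNReal.mul_rpow_of_nonneg _ _ hp1, ← ENNReal.rpow_mul]
    calc (∑' m : ℕ, Q ^ (((j:ℝ) + (m:ℝ)) * β) * g (j + m)) ^ p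
        = (∑' m, u m * v m) ^ p := by rw [tsum_congr hsplit]
      _ ≤ ((∑' m, u m ^ p') ^ (1/p') * (∑' m, v m ^ p) ^ (1/p)) ^ p :=
          ENNReal.rpow_le_rpow (holder hpq.symm u v) hp0.le
      _ = ((∑' m, u m ^ p') ^ (1/p')) ^ p * ((∑' m, v m ^ p) ^ (1/p)) ^ p := by
          rw [ENNReal.mul_rpow_of_nonneg _ _ hp0.le]
      _ = Q ^ ((j:ℝ) * γ * (p-1)) * ((1 - Q ^ γ)⁻¹) ^ (p-1) *
            ∑' m : ℕ, Q ^ (((j:ℝ) + (m:ℝ)) * ((β - σ) * p)) * g (j + m) ^ p := by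
          rw [hU, e1, e2, hV]
  -- now sum over j
  calc ∑' j : ℤ, Q ^ ((j : ℝ) * (1 - p * β)) *
        (∑' m : ℕ, Q ^ (((j : ℝ) + (m : ℝ)) * β) * g (j + m)) ^ p
      ≤ ∑' j : ℤ, Q ^ ((j : ℝ) * (1 - p * β)) *
          (Q ^ ((j:ℝ) * γ * (p-1)) * ((1 - Q ^ γ)⁻¹) ^ (p-1) *
            ∑' m : ℕ, Q ^ (((j:ℝ) + (m:ℝ)) * ((β - σ) * p)) * g (j + m) ^ p) :=
        ENNReal.tsum_le_tsum fun j => mul_le_mul_right (hinner j) _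
    _ = ((1 - Q ^ γ)⁻¹) ^ (p-1) *
          ∑' j : ℤ, ∑' m : ℕ, Q ^ ((j:ℝ) * (-γ)) *
            (Q ^ (((j:ℝ) + (m:ℝ)) * ((β - σ) * p)) * g (j + m) ^ p) := by
        rw [← ENNReal.tsum_mul_left]
        refine tsum_congr fun j => ?_
        rw [← ENNReal.tsum_mul_left, ← ENNReal.tsum_mul_left]
        rw [← ENNReal.tsum_mul_left]
        refine tsum_congr fun m => ?_
        have hcomb : Q ^ ((j:ℝ) * (1 - p*β)) * Q ^ ((j:ℝ) * γ * (p-1)) = Q ^ ((j:ℝ) * (-γ)) := by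
          rw [← ENNReal.rpow_add _ _ hQ0 hQt]
          congr 1
          linear_combination (j:ℝ) * hexp
        rw [← hcomb]
        ring
    _ = ((1 - Q ^ γ)⁻¹) ^ (p-1) *
          ∑' (j : ℤ) (m : ℕ),
            (fun (j' i : ℤ) => Q ^ ((j':ℝ) * (-γ)) * (Q ^ ((i:ℝ) * ((β - σ) * p)) * g i ^ p))
              j (j + m) := by
        congr 1
        refine tsum_congr fun j => tsum_congr fun m => ?_
        push_cast
        norm_num
    _ = ((1 - Q ^ γ)⁻¹) ^ (p-1) *
          ∑' (i : ℤ) (k : ℕ),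
            (fun (j' i' : ℤ) => Q ^ ((j':ℝ) * (-γ)) * (Q ^ ((i':ℝ) * ((β - σ) * p)) * g i' ^ p))
              (i - k) i := by
        congr 1
        exact reindex (fun j' i => Q ^ ((j':ℝ) * (-γ)) * (Q ^ ((i:ℝ) * ((β - σ) * p)) * g i ^ p))
    _ = ((1 - Q ^ γ)⁻¹) ^ (p-1) *
          ((1 - Q ^ γ)⁻¹ * ∑' i : ℤ, Q ^ (i:ℝ) * g i ^ p) := by
        congr 1
        rw [← ENNReal.tsum_mul_left]
        refine tsum_congr fun i => ?_
        have h1 : ∀ k : ℕ,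
            (fun (j' i' : ℤ) => Q ^ ((j':ℝ) * (-γ)) * (Q ^ ((i':ℝ) * ((β - σ) * p)) * g i' ^ p))
              (i - k) i
            = Q ^ ((i:ℝ) * (-γ) + (k:ℝ) * γ) * (Q ^ ((i:ℝ) * ((β - σ) * p)) * g i ^ p) := by
          intro k
          dsimp only
          congr 2
          push_cast
          ring
        rw [tsum_congr h1, ENNReal.tsum_mul_right, geom Q hQ0 hQt]
        have e3 : Q ^ ((i:ℝ) * (-γ)) * Q ^ ((i:ℝ) * ((β - σ) * p)) = Q ^ ((i:ℝ)) := by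
          rw [← ENNReal.rpow_add _ _ hQ0 hQt]
          congr 1
          linear_combination (i:ℝ) * hβσ
        rw [← e3]
        ring
    _ = (1 - Q ^ γ) ^ (-p) * ∑' i : ℤ, Q ^ (i:ℝ) * g i ^ p := by
        rw [← mul_assoc]
        congr 1
        have hDrw : (1 - Q ^ γ)⁻¹ = (1 - Q ^ γ) ^ (-1 : ℝ) := by
          rw [ENNReal.rpow_neg, ENNReal.rpow_one]
        rw [hDrw, ← ENNReal.rpow_mul, ← ENNReal.rpow_add _ _ hD0' hD1']
        congr 1
        ring


end QHardyAux

open QHardyAux Filter in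
theorem q_hardy_best_constant (q p α : ℝ) (hq : 0 < q) (hq1 : q < 1) (hp : 1 < p)
    (hα : α < 1 - 1 / p) :
    IsLeast {C : ℝ≥0∞ | ∀ f : ℝ → ℝ≥0∞,
        ∑' j : ℤ, (ENNReal.ofReal q) ^ ((j : ℝ) * (p * (α - 1) + 1)) *
            (∑' m : ℕ, (ENNReal.ofReal q) ^ (((j : ℝ) + (m : ℝ)) * (1 - α)) *
              f (q ^ ((j : ℝ) + (m : ℝ)))) ^ p
          ≤ C * ENNReal.ofReal ((1 - q) ^ (-p - 1) * (1 - q)) *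
              ∑' i : ℤ, (ENNReal.ofReal q) ^ (i : ℝ) * (f (q ^ (i : ℝ))) ^ p}
      (ENNReal.ofReal (((1 - q ^ ((p - 1) / p - α)) / (1 - q)) ^ (-p))) := by
  have hp0 : (0:ℝ) < p := lt_trans one_pos hp
  have hpne : p ≠ 0 := hp0.ne'
  set Q := ENNReal.ofReal q with hQdef
  have hQ0 : Q ≠ 0 := (ENNReal.ofReal_pos.mpr hq).ne'
  have hQt : Q ≠ ⊤ := ENNReal.ofReal_ne_top
  set β := 1 - α with hβdef
  have h1pβ : 1 / p < β := by rw [hβdef]; linarith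
  have hβ : 1 < p * β := by
    have := (div_lt_iff₀ hp0).mp h1pβ
    linarith
  set γ := β - 1 / p with hγdef
  have hγ : 0 < γ := by rw [hγdef]; linarith
  have hγeq : (p - 1) / p - α = γ := by rw [hγdef, hβdef]; field_simp; ring
  have hqγ : q ^ γ < 1 := Real.rpow_lt_one hq.le hq1 hγ
  have ha : (0:ℝ) < 1 - q ^ γ := by linarith
  have hb : (0:ℝ) < 1 - q := by linarith
  -- `1 - Q ^ t` as an `ofReal`
  have hofReal1 : ∀ t : ℝ, 0 < t → (1 : ℝ≥0∞) - Q ^ t = ENNReal.ofReal (1 - q ^ t) := by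
    intro t ht
    rw [hQdef, ENNReal.ofReal_rpow_of_pos hq, ← ENNReal.ofReal_one,
      ← ENNReal.ofReal_sub 1 (Real.rpow_nonneg hq.le t)]
  have hKc : ∀ t : ℝ, 0 < t →
      ((1 : ℝ≥0∞) - Q ^ t) ^ (-p) = ENNReal.ofReal ((1 - q ^ t) ^ (-p)) := by
    intro t ht
    have h2 : (0:ℝ) < 1 - q ^ t := by
      have := Real.rpow_lt_one hq.le hq1 ht; linarith
    rw [hofReal1 t ht, ENNReal.ofReal_rpow_of_pos h2]
  -- the constant multiplied out
  have hrealid : ((1 - q ^ γ) / (1 - q)) ^ (-p) * ((1 - q) ^ (-p - 1) * (1 - q))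
      = (1 - q ^ γ) ^ (-p) := by
    have h1 : (1 - q) ^ (-p - 1) * (1 - q) = (1 - q) ^ (-p) := by
      nth_rewrite 2 [← Real.rpow_one (1 - q)]
      rw [← Real.rpow_add hb]
      norm_num
    rw [h1, Real.div_rpow ha.le hb.le, div_mul_cancel₀ _ (Real.rpow_pos_of_pos hb (-p)).ne']
  have hKmul : ENNReal.ofReal (((1 - q ^ γ) / (1 - q)) ^ (-p)) *
      ENNReal.ofReal ((1 - q) ^ (-p - 1) * (1 - q)) = ((1 : ℝ≥0∞) - Q ^ γ) ^ (-p) := by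
    rw [← ENNReal.ofReal_mul (Real.rpow_nonneg (div_nonneg ha.le hb.le) (-p)), hrealid]
    exact (hKc γ hγ).symm
  constructor
  · -- membership : the inequality holds with the claimed constant
    intro f
    rw [hγeq, hKmul, show p * (α - 1) + 1 = 1 - p * β from by rw [hβdef]; ring]
    have H := core_upper q p β hq hq1 hp hβ (fun i : ℤ => f (q ^ (i : ℝ)))
    simp only [Int.cast_add, Int.cast_natCast] at H
    rw [← hQdef] at H
    rw [← hγdef] at H
    exact H
  · -- lower bound : any admissible constant is at least the claimed one
    intro C hC
    by_cases hCt : C = ⊤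
    · rw [hCt]; exact le_top
    have hc0 : ENNReal.ofReal ((1 - q) ^ (-p - 1) * (1 - q)) ≠ 0 := by
      rw [ne_eq, ENNReal.ofReal_eq_zero, not_le]
      positivity
    have hct : ENNReal.ofReal ((1 - q) ^ (-p - 1) * (1 - q)) ≠ ⊤ := ENNReal.ofReal_ne_top
    rw [hγeq, ← ENNReal.mul_le_mul_iff_left hc0 hct, hKmul]
    -- test functions indexed by δ > 0
    have key : ∀ δ : ℝ, 0 < δ →
        ENNReal.ofReal ((1 - q ^ (γ + δ)) ^ (-p))
          ≤ C * ENNReal.ofReal ((1 - q) ^ (-p - 1) * (1 - q)) := by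
      intro δ hδ
      have hγδ : 0 < γ + δ := by linarith
      have hpδ : 0 < p * δ := mul_pos hp0 hδ
      set fδ : ℝ → ℝ≥0∞ := fun x => if x ≤ 1 then ENNReal.ofReal (x ^ (δ - 1/p)) else 0
        with hfδ
      have hf1 : ∀ t : ℝ, 0 ≤ t → fδ (q ^ t) = Q ^ (t * (δ - 1/p)) := by
        intro t ht
        rw [hfδ]
        dsimp only
        rw [if_pos (Real.rpow_le_one hq.le hq1.le ht), ← Real.rpow_mul hq.le, hQdef,
          ENNReal.ofReal_rpow_of_pos hq]
      have hf0 : ∀ t : ℝ, t < 0 → fδ (q ^ t) = 0 := by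
        intro t ht
        rw [hfδ]
        dsimp only
        rw [if_neg (not_le.mpr ((Real.one_lt_rpow_iff_of_pos hq).2 (Or.inr ⟨hq1, ht⟩)))]
      have idA : ∀ x : ℝ, x + x * (δ - 1/p) * p = 0 + x * (p * δ) := by
        intro x; field_simp; ring
      have hSig : ∑' i : ℤ, Q ^ (i : ℝ) * (fδ (q ^ (i : ℝ))) ^ p = (1 - Q ^ (p * δ))⁻¹ := by
        rw [tsum_int_eq (fun i : ℤ => Q ^ (i : ℝ) * (fδ (q ^ (i : ℝ))) ^ p) (fun i hi => by
          rw [hf0 (i : ℝ) (by exact_mod_cast hi), ENNReal.zero_rpow_of_pos hp0, mul_zero])]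
        have hper : ∀ n : ℕ, Q ^ (((n : ℤ) : ℝ)) * (fδ (q ^ (((n : ℤ) : ℝ)))) ^ p
            = Q ^ (0 + (n : ℝ) * (p * δ)) := by
          intro n
          simp only [Int.cast_natCast]
          rw [hf1 (n : ℝ) (Nat.cast_nonneg n), ← ENNReal.rpow_mul,
            ← ENNReal.rpow_add _ _ hQ0 hQt, idA (n : ℝ)]
        rw [tsum_congr hper, geom Q hQ0 hQt, ENNReal.rpow_zero, one_mul]
      have hL : (1 - Q ^ (γ + δ))⁻¹ ^ p * (1 - Q ^ (p * δ))⁻¹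
          ≤ ∑' j : ℤ, Q ^ ((j : ℝ) * (p * (α - 1) + 1)) *
              (∑' m : ℕ, Q ^ (((j : ℝ) + (m : ℝ)) * β) * fδ (q ^ ((j : ℝ) + (m : ℝ)))) ^ p := by
        have hinner : ∀ n : ℕ,
            (∑' m : ℕ, Q ^ ((((n : ℤ) : ℝ) + (m : ℝ)) * β) * fδ (q ^ (((n : ℤ) : ℝ) + (m : ℝ))))
              = Q ^ ((n : ℝ) * (γ + δ)) * (1 - Q ^ (γ + δ))⁻¹ := by
          intro n
          have hper : ∀ m : ℕ,
              Q ^ ((((n : ℤ) : ℝ) + (m : ℝ)) * β) * fδ (q ^ (((n : ℤ) : ℝ) + (m : ℝ)))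
                = Q ^ ((n : ℝ) * (γ + δ) + (m : ℝ) * (γ + δ)) := by
            intro m
            simp only [Int.cast_natCast]
            rw [hf1 ((n : ℝ) + (m : ℝ)) (by positivity), ← ENNReal.rpow_add _ _ hQ0 hQt]
            congr 1
            rw [hγdef]
            ring
          rw [tsum_congr hper, geom Q hQ0 hQt]
        have step : ∀ n : ℕ,
            (fun j : ℤ => Q ^ ((j : ℝ) * (p * (α - 1) + 1)) *
              (∑' m : ℕ, Q ^ (((j : ℝ) + (m : ℝ)) * β) * fδ (q ^ ((j : ℝ) + (m : ℝ)))) ^ p)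
              ((n : ℕ) : ℤ)
            = Q ^ (0 + (n : ℝ) * (p * δ)) * (1 - Q ^ (γ + δ))⁻¹ ^ p := by
          intro n
          dsimp only
          rw [hinner n, ENNReal.mul_rpow_of_nonneg _ _ hp0.le, ← ENNReal.rpow_mul]
          simp only [Int.cast_natCast]
          rw [← mul_assoc, ← ENNReal.rpow_add _ _ hQ0 hQt]
          congr 2
          rw [hγdef, hβdef]
          field_simp
          ring
        calc (1 - Q ^ (γ + δ))⁻¹ ^ p * (1 - Q ^ (p * δ))⁻¹
            = ∑' n : ℕ, Q ^ (0 + (n : ℝ) * (p * δ)) * (1 - Q ^ (γ + δ))⁻¹ ^ p := by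
              rw [ENNReal.tsum_mul_right, geom Q hQ0 hQt, ENNReal.rpow_zero, one_mul,
                mul_comm]
          _ = ∑' n : ℕ,
              (fun j : ℤ => Q ^ ((j : ℝ) * (p * (α - 1) + 1)) *
                (∑' m : ℕ, Q ^ (((j : ℝ) + (m : ℝ)) * β) * fδ (q ^ ((j : ℝ) + (m : ℝ)))) ^ p)
                ((n : ℕ) : ℤ) := (tsum_congr fun n => (step n).symm)
          _ ≤ ∑' j : ℤ, Q ^ ((j : ℝ) * (p * (α - 1) + 1)) *
                (∑' m : ℕ, Q ^ (((j : ℝ) + (m : ℝ)) * β) * fδ (q ^ ((j : ℝ) + (m : ℝ)))) ^ p :=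
              ENNReal.tsum_comp_le_tsum_of_injective (fun a b h => by exact_mod_cast h) _
      have hCf := hC fδ
      rw [hSig] at hCf
      have hineq := hL.trans hCf
      have hpδ0 : (1 - Q ^ (p * δ)) ≠ 0 := by
        simp only [ne_eq, tsub_eq_zero_iff_le]
        exact fun hle => absurd
          (ENNReal.rpow_lt_one (by rw [hQdef]; exact ENNReal.ofReal_lt_one.mpr hq1) hpδ)
          (not_lt.mpr hle)
      have hpδt : (1 - Q ^ (p * δ)) ≠ ⊤ := (lt_of_le_of_lt tsub_le_self ENNReal.one_lt_top).ne
      have h3 : (1 - Q ^ (γ + δ))⁻¹ ^ p ≤ C * ENNReal.ofReal ((1 - q) ^ (-p - 1) * (1 - q)) := by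
        rw [← ENNReal.mul_le_mul_iff_left (ENNReal.inv_ne_zero.2 hpδt) (ENNReal.inv_ne_top.2 hpδ0)]
        exact hineq
      have h4 : (1 - Q ^ (γ + δ))⁻¹ ^ p = ENNReal.ofReal ((1 - q ^ (γ + δ)) ^ (-p)) := by
        rw [ENNReal.inv_rpow, ← ENNReal.rpow_neg, hKc (γ + δ) hγδ]
      rw [← h4]
      exact h3
    -- pass to the limit δ → 0⁺
    have cont : ContinuousAt (fun δ : ℝ => (1 - q ^ (γ + δ)) ^ (-p)) 0 := by
      have c1 : ContinuousAt (fun δ : ℝ => 1 - q ^ (γ + δ)) 0 :=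
        continuousAt_const.sub ((Real.continuousAt_const_rpow hq.ne').comp
          ((continuous_const.add continuous_id).continuousAt))
      refine c1.rpow_const (Or.inl ?_)
      show 1 - q ^ (γ + 0) ≠ 0
      rw [add_zero]
      exact ha.ne'
    have T : Tendsto (fun δ : ℝ => ENNReal.ofReal ((1 - q ^ (γ + δ)) ^ (-p)))
        (nhdsWithin 0 (Set.Ioi 0)) (nhds (ENNReal.ofReal ((1 - q ^ γ) ^ (-p)))) := by
      have h5 := (ENNReal.continuous_ofReal.continuousAt.comp cont).tendsto.mono_left
        (nhdsWithin_le_nhds (s := Set.Ioi (0:ℝ)))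
      simpa [Function.comp_def, add_zero] using h5
    have hfinal : ENNReal.ofReal ((1 - q ^ γ) ^ (-p))
        ≤ C * ENNReal.ofReal ((1 - q) ^ (-p - 1) * (1 - q)) :=
      le_of_tendsto T (Filter.eventually_of_mem self_mem_nhdsWithin fun δ hδ => key δ hδ)
    rw [hKc γ hγ]
    exact hfinal
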